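/- Let q be a real number with q > 0 and q ≠ 1, and let (T_n)_{n≥0} be a sequence of functions from ℝ to ℝ. Then there exists a real sequence (a_k)_{k≥0} such that T_n(x) = (q−1)^{−n} · Σ_{k=0}^{n} (−1)^{n−k} · binom(n,k) · a_k · q^{k·x} for all n ≥ 0 and all x ∈ ℝ, if and only if T_n(x) = Σ_{k=0}^{n} binom(n,k) · T_k(0) · q^{k·x} · [x]^{n−k} for all n ≥ 0 and all x ∈ ℝ. -/

import Mathlib

open Finset

/-- The q-bracket: `[x] = (q^x - 1)/(q - 1)`. -/
noncomputable def qb (q x : ℝ) : ℝ := (q ^ x - 1) / (q - 1)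

private lemma swap_tri (n : ℕ) (f : ℕ → ℕ → ℝ) :
    ∑ k ∈ range (n + 1), ∑ j ∈ range (k + 1), f k j
      = ∑ j ∈ range (n + 1), ∑ k ∈ Finset.Ico j (n + 1), f k j := by
  simp only [Finset.range_eq_Ico]
  exact (Finset.sum_Ico_Ico_comm 0 (n + 1) fun j k => f k j).symm

private lemma key_sum (n : ℕ) (y : ℝ) (c : ℕ → ℝ) :
    ∑ k ∈ range (n + 1), (-1 : ℝ) ^ (n - k) * (n.choose k : ℝ) *
        (∑ j ∈ range (k + 1), (k.choose j : ℝ) * c j) * y ^ k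
      = ∑ j ∈ range (n + 1), (n.choose j : ℝ) * c j * y ^ j * (y - 1) ^ (n - j) := by
  have h0 : ∀ k ∈ range (n + 1),
      (-1 : ℝ) ^ (n - k) * (n.choose k : ℝ) *
        (∑ j ∈ range (k + 1), (k.choose j : ℝ) * c j) * y ^ k
      = ∑ j ∈ range (k + 1),
          (-1 : ℝ) ^ (n - k) * ((n.choose k : ℝ) * (k.choose j : ℝ)) * c j * y ^ k := by
    intro k _
    rw [Finset.mul_sum, Finset.sum_mul]
    exact Finset.sum_congr rfl fun j _ => by ring
  rw [Finset.sum_congr rfl h0, swap_tri]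
  refine Finset.sum_congr rfl fun j hj => ?_
  rw [Finset.mem_range] at hj
  have hjn : j ≤ n := Nat.lt_succ_iff.mp hj
  rw [Finset.sum_Ico_eq_sum_range]
  have hrange : n + 1 - j = (n - j) + 1 := by omega
  rw [hrange]
  have h1 : ∀ t ∈ range ((n - j) + 1),
      (-1 : ℝ) ^ (n - (j + t)) * ((n.choose (j + t) : ℝ) * ((j + t).choose j : ℝ)) *
          c j * y ^ (j + t)
      = ((n.choose j : ℝ) * c j * y ^ j) *
          (y ^ t * (-1 : ℝ) ^ ((n - j) - t) * ((n - j).choose t : ℝ)) := by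
    intro t ht
    rw [Finset.mem_range] at ht
    have htn : j + t ≤ n := by omega
    have hmul : (n.choose (j + t)) * ((j + t).choose j) = n.choose j * (n - j).choose t := by
      have := Nat.choose_mul (n := n) (Nat.le_add_right j t)
      simpa using this
    have hcast : ((n.choose (j + t)) : ℝ) * ((j + t).choose j : ℝ)
        = (n.choose j : ℝ) * ((n - j).choose t : ℝ) := by
      exact_mod_cast congrArg (fun m : ℕ => (m : ℝ)) hmul
    rw [hcast]
    have hexp : n - (j + t) = (n - j) - t := by omega
    rw [hexp, pow_add]
    ring
  rw [Finset.sum_congr rfl h1, ← Finset.mul_sum]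
  congr 1
  rw [sub_pow y 1 (n - j)]
  refine (Finset.sum_congr rfl fun t ht => ?_).symm
  rw [Finset.mem_range] at ht
  have : (-1 : ℝ) ^ (t + (n - j)) = (-1 : ℝ) ^ ((n - j) - t) := by
    have h2 : t + (n - j) = ((n - j) - t) + 2 * t := by omega
    rw [h2, pow_add, pow_mul]
    simp
  rw [this]
  ring

private lemma inv_sum (n : ℕ) (a : ℕ → ℝ) :
    ∑ j ∈ range (n + 1), (n.choose j : ℝ) *
        (∑ k ∈ range (j + 1), (-1 : ℝ) ^ (j - k) * (j.choose k : ℝ) * a k)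
      = a n := by
  have h0 : ∀ j ∈ range (n + 1),
      (n.choose j : ℝ) *
        (∑ k ∈ range (j + 1), (-1 : ℝ) ^ (j - k) * (j.choose k : ℝ) * a k)
      = ∑ k ∈ range (j + 1),
          (-1 : ℝ) ^ (j - k) * ((n.choose j : ℝ) * (j.choose k : ℝ)) * a k := by
    intro j _
    rw [Finset.mul_sum]
    exact Finset.sum_congr rfl fun k _ => by ring
  rw [Finset.sum_congr rfl h0, swap_tri]
  have h1 : ∀ k ∈ range (n + 1),
      (∑ j ∈ Finset.Ico k (n + 1),
        (-1 : ℝ) ^ (j - k) * ((n.choose j : ℝ) * (j.choose k : ℝ)) * a k)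
      = if k = n then a n else 0 := by
    intro k hk
    rw [Finset.mem_range] at hk
    have hkn : k ≤ n := Nat.lt_succ_iff.mp hk
    rw [Finset.sum_Ico_eq_sum_range]
    have hrange : n + 1 - k = (n - k) + 1 := by omega
    rw [hrange]
    have h2 : ∀ t ∈ range ((n - k) + 1),
        (-1 : ℝ) ^ ((k + t) - k) * ((n.choose (k + t) : ℝ) * ((k + t).choose k : ℝ)) * a k
        = ((n.choose k : ℝ) * a k) *
            ((-1 : ℝ) ^ t * 1 ^ ((n - k) - t) * ((n - k).choose t : ℝ)) := by
      intro t ht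
      rw [Finset.mem_range] at ht
      have htn : k + t ≤ n := by omega
      have hmul : (n.choose (k + t)) * ((k + t).choose k) = n.choose k * (n - k).choose t := by
        have := Nat.choose_mul (n := n) (Nat.le_add_right k t)
        simpa using this
      have hcast : ((n.choose (k + t)) : ℝ) * ((k + t).choose k : ℝ)
          = (n.choose k : ℝ) * ((n - k).choose t : ℝ) := by
        exact_mod_cast congrArg (fun m : ℕ => (m : ℝ)) hmul
      rw [hcast]
      have : (k + t) - k = t := by omega
      rw [this]
      ring
    rw [Finset.sum_congr rfl h2, ← Finset.mul_sum, ← add_pow (-1 : ℝ) 1 (n - k)]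
    by_cases hkn' : k = n
    · subst hkn'
      simp
    · have : n - k ≠ 0 := by omega
      simp [this, hkn']
  rw [Finset.sum_congr rfl h1]
  simp

theorem carlitz_type_characterization (q : ℝ) (hq : 0 < q) (hq1 : q ≠ 1)
    (T : ℕ → ℝ → ℝ) :
    (∃ a : ℕ → ℝ, ∀ n : ℕ, ∀ x : ℝ,
        T n x = ((q - 1) ^ n)⁻¹ *
          ∑ k ∈ range (n + 1),
            (-1 : ℝ) ^ (n - k) * (n.choose k : ℝ) * a k * q ^ ((k : ℝ) * x)) ↔
    (∀ n : ℕ, ∀ x : ℝ,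
        T n x = ∑ k ∈ range (n + 1),
          (n.choose k : ℝ) * T k 0 * q ^ ((k : ℝ) * x) * (qb q x) ^ (n - k)) := by
  have hq1' : q - 1 ≠ 0 := sub_ne_zero.mpr hq1
  have hpow : ∀ (k : ℕ) (x : ℝ), q ^ ((k : ℝ) * x) = (q ^ x) ^ k := by
    intro k x
    rw [mul_comm, ← Real.rpow_natCast (q ^ x) k, ← Real.rpow_mul hq.le]
  -- the common algebraic step
  have halg : ∀ (n : ℕ) (x : ℝ),
      ((q - 1) ^ n)⁻¹ *
        ∑ j ∈ range (n + 1),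
          (n.choose j : ℝ) * ((q - 1) ^ j * T j 0) * (q ^ x) ^ j * (q ^ x - 1) ^ (n - j)
      = ∑ j ∈ range (n + 1),
          (n.choose j : ℝ) * T j 0 * q ^ ((j : ℝ) * x) * (qb q x) ^ (n - j) := by
    intro n x
    rw [Finset.mul_sum]
    refine Finset.sum_congr rfl fun j hj => ?_
    rw [Finset.mem_range] at hj
    have hjn : j ≤ n := Nat.lt_succ_iff.mp hj
    rw [hpow j x, qb, div_pow]
    have hsplit : (q - 1) ^ n = (q - 1) ^ j * (q - 1) ^ (n - j) := by
      rw [← pow_add]; congr 1; omega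
    rw [hsplit]
    have h1 : (q - 1) ^ j ≠ 0 := pow_ne_zero _ hq1'
    have h2 : (q - 1) ^ (n - j) ≠ 0 := pow_ne_zero _ hq1'
    field_simp
  constructor
  · rintro ⟨a, ha⟩ n x
    -- a k = ∑ j, C(k,j) (q-1)^j T j 0
    have hT0 : ∀ k : ℕ, (q - 1) ^ k * T k 0
        = ∑ j ∈ range (k + 1), (-1 : ℝ) ^ (k - j) * (k.choose j : ℝ) * a j := by
      intro k
      rw [ha k 0]
      rw [mul_inv_cancel_left₀ (pow_ne_zero _ hq1')]
      refine Finset.sum_congr rfl fun j _ => by simp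
    have haval : ∀ k : ℕ, a k
        = ∑ j ∈ range (k + 1), (k.choose j : ℝ) * ((q - 1) ^ j * T j 0) := by
      intro k
      rw [← inv_sum k a]
      refine Finset.sum_congr rfl fun j _ => ?_
      rw [hT0 j]
    rw [ha n x, ← halg n x]
    congr 1
    rw [← key_sum n (q ^ x) (fun j => (q - 1) ^ j * T j 0)]
    refine Finset.sum_congr rfl fun k _ => ?_
    rw [haval k, hpow k x]
  · intro h
    refine ⟨fun k => ∑ j ∈ range (k + 1), (k.choose j : ℝ) * ((q - 1) ^ j * T j 0),
      fun n x => ?_⟩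
    rw [h n x, ← halg n x]
    congr 1
    rw [← key_sum n (q ^ x) (fun j => (q - 1) ^ j * T j 0)]
    refine Finset.sum_congr rfl fun k _ => ?_
    rw [hpow k x]
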